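/- (Lemma 2, first part: exact coverage rate of the asymptotic confidence interval.) Fix an integer n ≥ 1, σ > 0, λ > 0, α ∈ (0,1) and θ > 0, set ν_0 = √λ, and let μ = N(θ, σ²/n). Then μ({x : |x − θ| < z_{α/2}·σ̃(θ)/√n} ∩ {x : |x| > ν_0}) / μ({x : |x| > ν_0}) = CR_a(θ, ν_0)/P_s(θ, ν_0); that is, the conditional coverage probability CR_1(θ) of the asymptotic-based 100(1−α)% confidence interval, given that θ is selected with tuning parameter λ, equals CR_a(θ, ν_0)/P_s(θ, ν_0). -/

import Mathlib

open MeasureTheory ProbabilityTheory Set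

/-- The standard normal cumulative distribution function. -/
noncomputable def Phi (x : ℝ) : ℝ := (gaussianReal 0 1 (Set.Iic x)).toReal

/-- P_s(θ,ν) = Φ(√n(θ − ν)/σ) + Φ(√n(−θ − ν)/σ). -/
noncomputable def Ps (n : ℕ) (σ θ ν : ℝ) : ℝ :=
  Phi (Real.sqrt n * (θ - ν) / σ) + Phi (Real.sqrt n * (-θ - ν) / σ)

/-- σ̃(θ) = (1 + λ/θ²)⁻¹ σ for θ ≠ 0, with the convention σ̃(0) = 0. -/
noncomputable def sigTilde (lam σ θ : ℝ) : ℝ :=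
  if θ = 0 then 0 else (1 + lam / θ ^ 2)⁻¹ * σ

open Classical in
/-- The piecewise function CR_a(θ,ν); here `za` denotes the quantile z_{α/2}. -/
noncomputable def CRa (n : ℕ) (σ lam za θ ν : ℝ) : ℝ :=
  if θ < |ν - za * sigTilde lam σ θ / Real.sqrt n| then
    (Ps n σ θ ν - 2 * Phi (-(za * sigTilde lam σ θ / σ))) *
      (if ν < za * sigTilde lam σ θ / Real.sqrt n then 1 else 0)
  else if θ ≤ ν + za * sigTilde lam σ θ / Real.sqrt n then
    Phi (za * sigTilde lam σ θ / σ) - Phi (Real.sqrt n * (ν - θ) / σ)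
  else 1 - 2 * Phi (-(za * sigTilde lam σ θ / σ))

open Classical in
/-- The piecewise function CR_b(θ,ν); here `za` denotes the quantile z_{α/2}. -/
noncomputable def CRb (n : ℕ) (σ α za θ ν : ℝ) : ℝ :=
  if θ < |ν - za * σ / Real.sqrt n| then
    (Ps n σ θ ν - α) * (if ν < za * σ / Real.sqrt n then 1 else 0)
  else if θ ≤ ν + za * σ / Real.sqrt n then
    1 - α / 2 - Phi (Real.sqrt n * (ν - θ) / σ)
  else 1 - α

local notation "G" => gaussianReal 0 1

instance : NullSingletonClass (gaussianReal 0 1) :=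
  ⟨fun x => gaussianReal_absolutelyContinuous 0 one_ne_zero (measure_singleton x)⟩

lemma G_Iic (x : ℝ) : (G (Iic x)).toReal = Phi x := rfl

lemma G_Iio (x : ℝ) : (G (Iio x)).toReal = Phi x := by
  rw [measure_congr (Iio_ae_eq_Iic (μ := G) (a := x))]; rfl

lemma G_Ioi (x : ℝ) : (G (Ioi x)).toReal = 1 - Phi x := by
  have : Ioi x = (Iic x)ᶜ := compl_Iic.symm
  rw [this, prob_compl_eq_one_sub measurableSet_Iic,
    ENNReal.toReal_sub_of_le prob_le_one ENNReal.one_ne_top, ENNReal.toReal_one, G_Iic]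

lemma Phi_mono : Monotone Phi := fun x y h =>
  ENNReal.toReal_mono (measure_ne_top _ _) (measure_mono (Iic_subset_Iic.2 h))

lemma Phi_neg (x : ℝ) : Phi (-x) = 1 - Phi x := by
  have hmap : Measure.map (fun y => (-1 : ℝ) * y) G = G := by
    rw [gaussianReal_map_const_mul]
    congr 1 <;> [skip; ext] <;> norm_num
  have : Phi (-x) = (G (Ici x)).toReal := by
    conv_lhs => rw [Phi, ← hmap]
    rw [Measure.map_apply (measurable_const_mul _) measurableSet_Iic]
    congr 2
    ext y
    simp only [mem_preimage, mem_Iic, mem_Ici]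
    constructor <;> intro h <;> linarith
  rw [this, ← measure_congr (Ioi_ae_eq_Ici (μ := G) (a := x)), G_Ioi]

lemma G_Ioo {a b : ℝ} (h : a ≤ b) : (G (Ioo a b)).toReal = Phi b - Phi a := by
  rw [measure_congr (Ioo_ae_eq_Ioc (μ := G) (a := a) (b := b))]
  have : Ioc a b = Iic b \ Iic a := by rw [Iic_sdiff_Iic]
  rw [this, measure_diff (Iic_subset_Iic.2 h) measurableSet_Iic.nullMeasurableSet
    (measure_ne_top _ _), ENNReal.toReal_sub_of_le (measure_mono (Iic_subset_Iic.2 h))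
    (measure_ne_top _ _), G_Iic, G_Iic]

lemma G_union {A B : Set ℝ} (hd : Disjoint A B) (hB : MeasurableSet B) :
    (G (A ∪ B)).toReal = (G A).toReal + (G B).toReal := by
  rw [measure_union hd hB, ENNReal.toReal_add (measure_ne_top _ _) (measure_ne_top _ _)]

lemma Phi_zero : Phi 0 = 1/2 := by
  have := Phi_neg 0; rw [neg_zero] at this; linarith

/-- Lemma 2, first part: the conditional coverage probability of the
asymptotic confidence interval, given selection (|x| > ν₀ = √λ), equals
CR_a(θ, ν₀)/P_s(θ, ν₀). -/
theorem CR1_eq_conditional_coverage (n : ℕ) (hn : 1 ≤ n) (σ lam α za θ : ℝ)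
    (hσ : 0 < σ) (hlam : 0 < lam) (hα : α ∈ Set.Ioo (0:ℝ) 1)
    (hza : Phi (-za) = α / 2) (hθ : 0 < θ) :
    ((gaussianReal θ (Real.toNNReal (σ^2 / n)))
        ({x : ℝ | |x - θ| < za * sigTilde lam σ θ / Real.sqrt n}
          ∩ {x : ℝ | Real.sqrt lam < |x|})).toReal
      / ((gaussianReal θ (Real.toNNReal (σ^2 / n)))
          {x : ℝ | Real.sqrt lam < |x|}).toReal
      = CRa n σ lam za θ (Real.sqrt lam) / Ps n σ θ (Real.sqrt lam) := by
  have hn0 : (0:ℝ) < n := by exact_mod_cast hn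
  have hsn : (0:ℝ) < Real.sqrt n := Real.sqrt_pos.2 hn0
  set ν := Real.sqrt lam with hνdef
  have hν : 0 < ν := Real.sqrt_pos.2 hlam
  set s : ℝ := σ / Real.sqrt n with hsdef
  have hs : 0 < s := div_pos hσ hsn
  have hst : 0 < sigTilde lam σ θ := by
    rw [sigTilde, if_neg hθ.ne']
    positivity
  set c : ℝ := za * sigTilde lam σ θ / Real.sqrt n with hcdef
  -- za > 0
  have hza_pos : 0 < za := by
    by_contra h
    push_neg at h
    have h1 : Phi 0 ≤ Phi (-za) := Phi_mono (by linarith)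
    rw [Phi_zero, hza] at h1
    linarith [hα.2]
  have hc : 0 < c := by
    rw [hcdef]; positivity
  set a : ℝ := (-ν - θ) / s with hadef
  set b : ℝ := (ν - θ) / s with hbdef
  set r : ℝ := c / s with hrdef
  have hr : 0 < r := div_pos hc hs
  have hab : a < b := (div_lt_div_iff_of_pos_right hs).2 (by linarith)
  have hnr : -r = (-c) / s := (neg_div _ _).symm
  -- key algebraic identities for the Phi arguments
  have e1 : Real.sqrt n * (θ - ν) / σ = -b := by
    rw [hbdef, hsdef]; field_simp; ring
  have e2 : Real.sqrt n * (-θ - ν) / σ = a := by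
    rw [hadef, hsdef]; field_simp; ring
  have e3 : Real.sqrt n * (ν - θ) / σ = b := by
    rw [hbdef, hsdef]; field_simp; try ring
  have e4 : za * sigTilde lam σ θ / σ = r := by
    rw [hrdef, hcdef, hsdef]; field_simp; try ring
  -- the map representation
  have hf : Measurable fun x : ℝ => s * x + θ := (measurable_id.const_mul s).add_const θ
  have hvar : ((.mk (s^2) (sq_nonneg s) : NNReal) * 1 : NNReal) = Real.toNNReal (σ^2 / n) := by
    have : s^2 = σ^2 / n := by rw [hsdef, div_pow, Real.sq_sqrt hn0.le]
    ext
    rw [NNReal.coe_mul, NNReal.coe_one, mul_one, Real.coe_toNNReal _ (by positivity), ← this]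
    rfl
  have hmap : Measure.map (fun x : ℝ => s * x + θ) (gaussianReal 0 1)
      = gaussianReal θ (Real.toNNReal (σ^2 / n)) := by
    have h1 : (fun x : ℝ => s * x + θ) = (· + θ) ∘ (fun x : ℝ => s * x) := rfl
    rw [h1, ← Measure.map_map (measurable_add_const θ) (measurable_const_mul s),
      gaussianReal_map_const_mul, gaussianReal_map_add_const, hvar, mul_zero, zero_add]
  -- preimage computations
  have hpre2 : (fun x : ℝ => s * x + θ) ⁻¹' {x : ℝ | ν < |x|} = Iio a ∪ Ioi b := by
    ext x
    simp only [mem_preimage, mem_setOf_eq, mem_union, mem_Iio, mem_Ioi, lt_abs]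
    rw [hadef, hbdef, div_lt_iff₀ hs, lt_div_iff₀ hs]
    constructor
    · rintro (h | h)
      · right; linarith
      · left; linarith
    · rintro (h | h)
      · right; linarith
      · left; linarith
  have hpre1 : (fun x : ℝ => s * x + θ) ⁻¹'
      ({x : ℝ | |x - θ| < c} ∩ {x : ℝ | ν < |x|}) = Ioo (-r) r ∩ (Iio a ∪ Ioi b) := by
    rw [Set.preimage_inter, hpre2]
    congr 1
    ext x
    simp only [mem_preimage, mem_setOf_eq, add_sub_cancel_right, mem_Ioo, abs_lt]
    constructor
    · rintro ⟨h1, h2⟩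
      constructor
      · rw [hnr, div_lt_iff₀ hs]; linarith [mul_comm s x]
      · rw [hrdef, lt_div_iff₀ hs]; linarith [mul_comm s x]
    · rintro ⟨h1, h2⟩
      rw [hnr, div_lt_iff₀ hs] at h1
      rw [hrdef, lt_div_iff₀ hs] at h2
      constructor <;> linarith [mul_comm s x]
  have hm1 : MeasurableSet ({x : ℝ | |x - θ| < c} ∩ {x : ℝ | ν < |x|}) := by
    exact (measurableSet_lt ((measurable_id.sub_const θ).abs) measurable_const).inter
      (measurableSet_lt measurable_const measurable_abs)
  have hm2 : MeasurableSet {x : ℝ | ν < |x|} :=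
    measurableSet_lt measurable_const measurable_abs
  have hdis : Disjoint (Iio a) (Ioi b) := by
    rw [Set.disjoint_left]
    intro x hx hx'
    simp only [mem_Iio, mem_Ioi] at hx hx'
    linarith
  -- denominator
  have hden : ((gaussianReal θ (Real.toNNReal (σ^2 / n))) {x : ℝ | ν < |x|}).toReal
      = Ps n σ θ ν := by
    rw [← hmap, Measure.map_apply hf hm2, hpre2, G_union hdis measurableSet_Ioi,
      G_Iio, G_Ioi, Ps, e1, e2, Phi_neg]
    ring
  -- numerator
  have hnum : ((gaussianReal θ (Real.toNNReal (σ^2 / n)))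
      ({x : ℝ | |x - θ| < c} ∩ {x : ℝ | ν < |x|})).toReal = CRa n σ lam za θ ν := by
    rw [← hmap, Measure.map_apply hf hm1, hpre1, CRa]
    rw [← hcdef]
    split_ifs with h1 h2 h3
    · -- θ < |ν - c|, ν < c : two pieces
      have habs : |ν - c| = c - ν := by rw [abs_of_neg (by linarith)]; ring
      rw [habs] at h1
      have ha1 : -r < a := by rw [hnr, hadef]; exact (div_lt_div_iff_of_pos_right hs).2 (by linarith)
      have hb1 : b < r := by rw [hrdef, hbdef]; exact (div_lt_div_iff_of_pos_right hs).2 (by linarith)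
      have hset : Ioo (-r) r ∩ (Iio a ∪ Ioi b) = Ioo (-r) a ∪ Ioo b r := by
        ext x
        simp only [mem_inter_iff, mem_Ioo, mem_union, mem_Iio, mem_Ioi]
        constructor
        · rintro ⟨⟨hx1, hx2⟩, hx3 | hx3⟩
          · exact Or.inl ⟨hx1, hx3⟩
          · exact Or.inr ⟨hx3, hx2⟩
        · rintro (⟨hx1, hx2⟩ | ⟨hx1, hx2⟩)
          · exact ⟨⟨hx1, by linarith⟩, Or.inl hx2⟩
          · exact ⟨⟨by linarith, hx2⟩, Or.inr hx1⟩
      have hdis2 : Disjoint (Ioo (-r) a) (Ioo b r) := by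
        rw [Set.disjoint_left]
        intro x hx hx'
        simp only [mem_Ioo] at hx hx'
        linarith [hx.2, hx'.1]
      rw [hset, G_union hdis2 measurableSet_Ioo, G_Ioo ha1.le, G_Ioo hb1.le,
        Ps, e1, e2, e4, Phi_neg, Phi_neg, mul_one]
      ring
    · -- θ < |ν - c|, ν ≥ c : empty
      push_neg at h2
      have habs : |ν - c| = ν - c := abs_of_nonneg (by linarith)
      rw [habs] at h1
      have hb1 : r < b := by rw [hrdef, hbdef]; exact (div_lt_div_iff_of_pos_right hs).2 (by linarith)
      have ha1 : a < -r := by rw [hnr, hadef]; exact (div_lt_div_iff_of_pos_right hs).2 (by linarith)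
      have hset : Ioo (-r) r ∩ (Iio a ∪ Ioi b) = (∅ : Set ℝ) := by
        ext x
        simp only [mem_inter_iff, mem_Ioo, mem_union, mem_Iio, mem_Ioi,
          mem_empty_iff_false, iff_false, not_and, not_or]
        rintro ⟨hx1, hx2⟩
        constructor <;> intro <;> linarith
      rw [hset, measure_empty, mul_zero, ENNReal.toReal_zero]
    · -- |ν - c| ≤ θ ≤ ν + c : one piece
      push_neg at h1
      have h1' := abs_le.1 h1
      have ha1 : a ≤ -r := by rw [hnr, hadef]; exact (div_le_div_iff_of_pos_right hs).2 (by linarith [h1'.1])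
      have hb1 : b ≤ r := by rw [hrdef, hbdef]; exact (div_le_div_iff_of_pos_right hs).2 (by linarith [h1'.2])
      have hb2 : -r ≤ b := by rw [hnr, hbdef]; exact (div_le_div_iff_of_pos_right hs).2 (by linarith)
      have hset : Ioo (-r) r ∩ (Iio a ∪ Ioi b) = Ioo b r := by
        ext x
        simp only [mem_inter_iff, mem_Ioo, mem_union, mem_Iio, mem_Ioi]
        constructor
        · rintro ⟨⟨hx1, hx2⟩, hx3 | hx3⟩
          · exact absurd hx3 (by push_neg; linarith)
          · exact ⟨hx3, hx2⟩
        · rintro ⟨hx1, hx2⟩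
          exact ⟨⟨by linarith, hx2⟩, Or.inr hx1⟩
      rw [hset, G_Ioo hb1, e3, e4]
    · -- θ > ν + c : full interval
      push_neg at h1 h3
      have h1' := abs_le.1 h1
      have hb1 : b < -r := by rw [hnr, hbdef]; exact (div_lt_div_iff_of_pos_right hs).2 (by linarith)
      have hset : Ioo (-r) r ∩ (Iio a ∪ Ioi b) = Ioo (-r) r := by
        apply Set.inter_eq_left.2
        intro x hx
        simp only [mem_Ioo] at hx
        exact Or.inr (by simp only [mem_Ioi]; linarith [hx.1])
      rw [hset, G_Ioo (by linarith : -r ≤ r), e4, Phi_neg]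
      ring
  rw [hnum, hden]
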